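/- There is a universal constant C > 0 such that the following holds for every n ≥ 2 and every instance with marginal distributions F_1,...,F_n on the nonnegative reals having finite Myerson revenues: there exist a subset S ⊆ {1,...,n} whose Myerson revenues are at most a factor 2 apart (max_{i∈S} Mye(F_i) ≤ 2 · min_{i∈S} Mye(F_i)) and a pricing p with p_j = ∞ for every j ∉ S, such that p is (C·log n)-max-min optimal, i.e., C·(log n)·R(p) ≥ R*. -/

import Mathlib

open MeasureTheory
open scoped ENNReal NNReal

noncomputable section

/-- A buyer's purchase rule for `n` items: given a valuation profile and a vector of item prices
(in `[0,∞]`), `choose` returns the purchased item (or `none` if nothing is purchased).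
The axioms say: a purchased item has a finite price and yields nonnegative utility
(`feasible`), the purchased item maximizes utility among all items (`optimal`), and the buyer
does purchase whenever some item yields nonnegative utility (`active`). Ties among
utility-maximizing items are broken according to the (fixed) rule embodied by `choose`. -/
structure BuyerRule (n : ℕ) where
  choose : (Fin n → ℝ) → (Fin n → ℝ≥0∞) → Option (Fin n)
  feasible : ∀ v p j, choose v p = some j → p j ≠ ⊤ ∧ (p j).toReal ≤ v j
  optimal : ∀ v p j k, choose v p = some j → p k ≠ ⊤ →
      v k - (p k).toReal ≤ v j - (p j).toReal
  active : ∀ v p, (∃ k, p k ≠ ⊤ ∧ (p k).toReal ≤ v k) → (choose v p).isSome = true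

/-- The seller's revenue from valuation profile `v` under pricing `p`. -/
def BuyerRule.revenue {n : ℕ} (B : BuyerRule n) (p : Fin n → ℝ≥0∞) (v : Fin n → ℝ) : ℝ≥0∞ :=
  (B.choose v p).elim 0 (fun j => p j)

/-- A joint distribution `F` on valuation profiles is compatible with the marginals `marg`
if it is a probability measure whose `j`-th one-dimensional marginal is `marg j` for every `j`. -/
def Compatible {n : ℕ} (marg : Fin n → Measure ℝ) (F : Measure (Fin n → ℝ)) : Prop :=
  IsProbabilityMeasure F ∧ ∀ j, F.map (fun v => v j) = marg j

/-- `R(p,F)`: the expected revenue of pricing `p` under joint distribution `F`. -/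
def expRev {n : ℕ} (B : BuyerRule n) (p : Fin n → ℝ≥0∞) (F : Measure (Fin n → ℝ)) : ℝ≥0∞ :=
  ∫⁻ v, B.revenue p v ∂F

/-- `R(p)`: the robust revenue guarantee of `p`, the infimum of `R(p,F)` over compatible `F`. -/
def robustRev {n : ℕ} (B : BuyerRule n) (marg : Fin n → Measure ℝ) (p : Fin n → ℝ≥0∞) : ℝ≥0∞ :=
  ⨅ (F : Measure (Fin n → ℝ)) (_ : Compatible marg F), expRev B p F

/-- `R*`: the optimal robust revenue guarantee over all pricings. -/
def optRobust {n : ℕ} (B : BuyerRule n) (marg : Fin n → Measure ℝ) : ℝ≥0∞ :=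
  ⨆ p : Fin n → ℝ≥0∞, robustRev B marg p

/-- The Myerson (monopoly) revenue of a single-item distribution `μ`:
`Mye(μ) = sup_{x ≥ 0} x · Pr_{v ~ μ}[v ≥ x]`. -/
def Mye (μ : Measure ℝ) : ℝ≥0∞ :=
  ⨆ x : ℝ≥0, (x : ℝ≥0∞) * μ {v : ℝ | (x : ℝ) ≤ v}

/-! ### Auxiliary material -/

attribute [local instance] Classical.propDecidable

namespace RobustAux

/-- marginal of a product of probability measures -/
lemma map_eval_pi {ι : Type*} [Fintype ι] {α : ι → Type*} [∀ i, MeasurableSpace (α i)]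
    (μ : ∀ i, Measure (α i)) [∀ i, IsProbabilityMeasure (μ i)] (i : ι) :
    (Measure.pi μ).map (Function.eval i) = μ i := by
  classical
  refine Measure.ext fun s hs => ?_
  rw [Measure.map_apply (measurable_pi_apply i) hs, Set.eval_preimage, Measure.pi_pi]
  rw [Finset.prod_eq_single i]
  · simp
  · intro b _ hb
    simp [Function.update_of_ne hb]
  · simp

variable {n : ℕ} (B : BuyerRule n) (marg : Fin n → Measure ℝ)

/-- the contribution of item `j` when it is qualified -/
def qualTerm (p : Fin n → ℝ≥0∞) (j : Fin n) (v : Fin n → ℝ) : ℝ≥0∞ :=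
  if p j ≠ ⊤ ∧ (p j).toReal ≤ v j then p j else 0

lemma measurable_qualTerm (p : Fin n → ℝ≥0∞) (j : Fin n) :
    Measurable (qualTerm p j) := by
  unfold qualTerm
  by_cases hp : p j = ⊤
  · simp [hp]
  · have : (fun v : Fin n → ℝ => if p j ≠ ⊤ ∧ (p j).toReal ≤ v j then p j else 0)
        = fun v => if (p j).toReal ≤ v j then p j else 0 := by
      funext v; simp [hp]
    rw [this]
    exact Measurable.ite ((measurable_pi_apply j) measurableSet_Ici) measurable_const
      measurable_const

lemma revenue_le_sum_qualTerm (p : Fin n → ℝ≥0∞) (v : Fin n → ℝ) :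
    B.revenue p v ≤ ∑ j, qualTerm p j v := by
  unfold BuyerRule.revenue
  rcases hc : B.choose v p with _ | j
  · simp
  · have hf := B.feasible v p j hc
    have : qualTerm p j v = p j := by simp [qualTerm, hf.1, hf.2]
    calc (Option.some j).elim 0 (fun j => p j) = p j := rfl
      _ = qualTerm p j v := this.symm
      _ ≤ ∑ j, qualTerm p j v :=
        Finset.single_le_sum (f := fun i => qualTerm p i v) (fun _ _ => zero_le) (Finset.mem_univ j)

lemma lintegral_qualTerm_le {F : Measure (Fin n → ℝ)} (hF : Compatible marg F)
    (p : Fin n → ℝ≥0∞) (j : Fin n) :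
    ∫⁻ v, qualTerm p j v ∂F ≤ Mye (marg j) := by
  by_cases hp : p j = ⊤
  · simp [qualTerm, hp]
  · set x : ℝ≥0 := (p j).toNNReal with hx
    have hpx : p j = (x : ℝ≥0∞) := by simp [hx, ENNReal.coe_toNNReal hp]
    have hxr : ((x : ℝ≥0) : ℝ) = (p j).toReal := rfl
    have hset : {v : Fin n → ℝ | (p j).toReal ≤ v j}
        = (fun v : Fin n → ℝ => v j) ⁻¹' {y : ℝ | (x : ℝ) ≤ y} := by
      ext v; simp [hxr]
    have hmeas : MeasurableSet {y : ℝ | (x : ℝ) ≤ y} := measurableSet_Ici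
    have h1 : (fun v : Fin n → ℝ => qualTerm p j v)
        = {v : Fin n → ℝ | (p j).toReal ≤ v j}.indicator (fun _ => p j) := by
      funext v
      by_cases h : (p j).toReal ≤ v j <;> simp [qualTerm, hp, h, Set.indicator]
    rw [h1, lintegral_indicator_const]
    · rw [hset, ← Measure.map_apply (measurable_pi_apply j) hmeas, hF.2 j, hpx]
      exact le_iSup (fun x : ℝ≥0 => (x : ℝ≥0∞) * (marg j) {v : ℝ | (x:ℝ) ≤ v}) x
    · rw [hset]; exact (measurable_pi_apply j) hmeas

lemma expRev_le_sum_Mye {F : Measure (Fin n → ℝ)} (hF : Compatible marg F)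
    (p : Fin n → ℝ≥0∞) :
    expRev B p F ≤ ∑ j, Mye (marg j) := by
  calc expRev B p F ≤ ∫⁻ v, ∑ j, qualTerm p j v ∂F :=
        lintegral_mono (revenue_le_sum_qualTerm B p)
    _ = ∑ j, ∫⁻ v, qualTerm p j v ∂F :=
        lintegral_finset_sum _ (fun j _ => measurable_qualTerm p j)
    _ ≤ ∑ j, Mye (marg j) :=
        Finset.sum_le_sum fun j _ => lintegral_qualTerm_le marg hF p j

lemma compatible_pi [∀ j, IsProbabilityMeasure (marg j)] :
    Compatible marg (Measure.pi marg) :=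
  ⟨inferInstance, fun j => map_eval_pi marg j⟩

lemma robustRev_le_expRev {F : Measure (Fin n → ℝ)} (hF : Compatible marg F)
    (p : Fin n → ℝ≥0∞) : robustRev B marg p ≤ expRev B p F :=
  iInf₂_le F hF

lemma robustRev_le_sum_Mye [∀ j, IsProbabilityMeasure (marg j)] (p : Fin n → ℝ≥0∞) :
    robustRev B marg p ≤ ∑ j, Mye (marg j) :=
  le_trans (robustRev_le_expRev B marg (compatible_pi marg) p)
    (expRev_le_sum_Mye B marg (compatible_pi marg) p)

/-- condition: item `j` is a qualified utility-maximizer within `T` -/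
def maxCond (T : Finset (Fin n)) (p : Fin n → ℝ≥0∞) (j : Fin n) (v : Fin n → ℝ) : Prop :=
  p j ≠ ⊤ ∧ (p j).toReal ≤ v j ∧
    ∀ i ∈ T, p i ≠ ⊤ → v i - (p i).toReal ≤ v j - (p j).toReal

/-- the largest price among qualified utility-maximizers within `T` (0 if none). -/
def revBar (T : Finset (Fin n)) (p : Fin n → ℝ≥0∞) (v : Fin n → ℝ) : ℝ≥0∞ :=
  (T.filter (fun j => maxCond T p j v)).sup p

lemma measurableSet_maxCond (T : Finset (Fin n)) (p : Fin n → ℝ≥0∞) (j : Fin n) :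
    MeasurableSet {v : Fin n → ℝ | maxCond T p j v} := by
  unfold maxCond
  by_cases hp : p j = ⊤
  · have : {v : Fin n → ℝ | p j ≠ ⊤ ∧ (p j).toReal ≤ v j ∧
        ∀ i ∈ T, p i ≠ ⊤ → v i - (p i).toReal ≤ v j - (p j).toReal} = ∅ := by
      ext v; simp [hp]
    rw [this]; exact MeasurableSet.empty
  · have : {v : Fin n → ℝ | p j ≠ ⊤ ∧ (p j).toReal ≤ v j ∧
        ∀ i ∈ T, p i ≠ ⊤ → v i - (p i).toReal ≤ v j - (p j).toReal}
      = {v : Fin n → ℝ | (p j).toReal ≤ v j} ∩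
        ⋂ i ∈ T, {v : Fin n → ℝ | p i ≠ ⊤ → v i - (p i).toReal ≤ v j - (p j).toReal} := by
      ext v; simp [hp]
    rw [this]
    refine MeasurableSet.inter ((measurable_pi_apply j) measurableSet_Ici) ?_
    refine MeasurableSet.biInter (Set.to_countable _) fun i _ => ?_
    by_cases hpi : p i = ⊤
    · simp [hpi]
    · have : {v : Fin n → ℝ | p i ≠ ⊤ → v i - (p i).toReal ≤ v j - (p j).toReal}
          = {v : Fin n → ℝ | v i - v j ≤ (p i).toReal - (p j).toReal} := by
        ext v; simp [hpi]; constructor <;> intro h <;> linarith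
      rw [this]
      exact measurableSet_le (by fun_prop) measurable_const


lemma revBar_eq_iSup (T : Finset (Fin n)) (p : Fin n → ℝ≥0∞) (v : Fin n → ℝ) :
    revBar T p v = ⨆ j : Fin n, (if j ∈ T ∧ maxCond T p j v then p j else 0) := by
  apply le_antisymm
  · refine Finset.sup_le fun j hj => ?_
    rw [Finset.mem_filter] at hj
    have : (if j ∈ T ∧ maxCond T p j v then p j else 0) = p j := by
      simp [hj.1, hj.2]
    rw [← this]
    exact le_iSup (fun j => if j ∈ T ∧ maxCond T p j v then p j else 0) j
  · refine iSup_le fun j => ?_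
    by_cases h : j ∈ T ∧ maxCond T p j v
    · simp only [h, if_true]
      exact Finset.le_sup (Finset.mem_filter.2 ⟨h.1, h.2⟩)
    · simp [h]

lemma measurable_revBar (T : Finset (Fin n)) (p : Fin n → ℝ≥0∞) :
    Measurable (revBar T p) := by
  have h : revBar T p = fun v => ⨆ j : Fin n, (if j ∈ T ∧ maxCond T p j v then p j else 0) :=
    funext fun v => revBar_eq_iSup T p v
  rw [h]
  refine Measurable.iSup fun j => ?_
  by_cases hjT : j ∈ T
  · have : (fun v => if j ∈ T ∧ maxCond T p j v then p j else 0)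
        = fun v => if maxCond T p j v then p j else 0 := by
      funext v; simp [hjT]
    rw [this]
    exact Measurable.ite (measurableSet_maxCond T p j) measurable_const measurable_const
  · have : (fun v => if j ∈ T ∧ maxCond T p j v then p j else 0) = fun _ => 0 := by
      funext v; simp [hjT]
    rw [this]; exact measurable_const

lemma revBar_congr (T : Finset (Fin n)) (p : Fin n → ℝ≥0∞) {v w : Fin n → ℝ}
    (h : ∀ j ∈ T, v j = w j) : revBar T p v = revBar T p w := by
  unfold revBar
  congr 1
  refine Finset.filter_congr fun j hj => ?_
  unfold maxCond
  rw [h j hj]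
  constructor <;> rintro ⟨h1, h2, h3⟩ <;>
    exact ⟨h1, h2, fun i hi hpi => by
      have := h3 i hi hpi
      first
        | (rw [h i hi] at this; exact this)
        | (rw [← h i hi] at this; exact this)
      ⟩

lemma revBar_le_sum_qualTerm (T : Finset (Fin n)) (p : Fin n → ℝ≥0∞) (v : Fin n → ℝ) :
    revBar T p v ≤ ∑ j, qualTerm p j v := by
  refine Finset.sup_le fun j hj => ?_
  rw [Finset.mem_filter] at hj
  have : qualTerm p j v = p j := by simp [qualTerm, hj.2.1, hj.2.2.1]
  rw [← this]
  exact Finset.single_le_sum (f := fun i => qualTerm p i v) (fun _ _ => zero_le)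
    (Finset.mem_univ j)

/-- Claim A: if the buyer purchases item `j₀` lying in `T`, the price paid
is at most `revBar T`. -/
lemma price_le_revBar (v : Fin n → ℝ) (p : Fin n → ℝ≥0∞) {j₀ : Fin n}
    (hc : B.choose v p = some j₀) (hT : j₀ ∈ T) : p j₀ ≤ revBar T p v := by
  have hf := B.feasible v p j₀ hc
  have hmax : maxCond T p j₀ v :=
    ⟨hf.1, hf.2, fun i _ hpi => B.optimal v p j₀ i hc hpi⟩
  exact Finset.le_sup (Finset.mem_filter.2 ⟨hT, hmax⟩)

/-- the bucket pricing associated with prices `p` on the set `T`: halve the prices on `T`,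
and remove all items outside `T`. -/
def hatp (T : Finset (Fin n)) (p : Fin n → ℝ≥0∞) : Fin n → ℝ≥0∞ :=
  fun j => if j ∈ T ∧ p j ≠ ⊤ then p j / 2 else ⊤

/-- Claim B: the max-price within-`T` utility-maximizer benchmark is dominated by twice
the actual revenue of the halved pricing restricted to `T`, pointwise, for any buyer rule. -/
lemma revBar_le_revenue_hatp (v : Fin n → ℝ) (p : Fin n → ℝ≥0∞) (T : Finset (Fin n)) :
    revBar T p v ≤ 2 * B.revenue (hatp T p) v := by
  rcases Finset.eq_empty_or_nonempty (T.filter (fun j => maxCond T p j v)) with he | hne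
  · unfold revBar; rw [he]; simp
  · obtain ⟨e, he, hsup⟩ := Finset.exists_mem_eq_sup _ hne p
    rw [Finset.mem_filter] at he
    have heT := he.1
    have hpe := he.2.1
    have hqe := he.2.2.1
    have hmaxe := he.2.2.2
    have hhatpe : hatp T p e = p e / 2 := by simp [hatp, heT, hpe]
    have hpe2 : p e / 2 ≠ ⊤ := (ENNReal.div_lt_top hpe (by norm_num)).ne
    have htre : (p e / 2).toReal = (p e).toReal / 2 := by
      rw [ENNReal.toReal_div]; norm_num
    have hpe_nonneg : 0 ≤ (p e).toReal := ENNReal.toReal_nonneg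
    -- the buyer is active under `hatp T p`
    have hact : ∃ k, hatp T p k ≠ ⊤ ∧ (hatp T p k).toReal ≤ v k := by
      refine ⟨e, by rw [hhatpe]; exact hpe2, ?_⟩
      rw [hhatpe, htre]
      linarith
    have hsome := B.active v (hatp T p) hact
    rw [Option.isSome_iff_exists] at hsome
    obtain ⟨c, hc⟩ := hsome
    have hfc := B.feasible v (hatp T p) c hc
    have hcT : c ∈ T ∧ p c ≠ ⊤ := by
      by_contra h
      exact hfc.1 (by simp [hatp, h])
    have hhatpc : hatp T p c = p c / 2 := by simp [hatp, hcT.1, hcT.2]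
    have htrc : (p c / 2).toReal = (p c).toReal / 2 := by
      rw [ENNReal.toReal_div]; norm_num
    -- optimality of c against e under hatp
    have hopt := B.optimal v (hatp T p) c e hc (by rw [hhatpe]; exact hpe2)
    rw [hhatpe, hhatpc, htre, htrc] at hopt
    -- e is a within-T maximizer against c under p
    have hmax := hmaxe c hcT.1 hcT.2
    -- conclude p e ≤ p c
    have hle : (p e).toReal ≤ (p c).toReal := by linarith
    have hpec : p e ≤ p c := by
      rwa [ENNReal.toReal_le_toReal hpe hcT.2] at hle
    have hrev : B.revenue (hatp T p) v = p c / 2 := by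
      unfold BuyerRule.revenue; rw [hc]; exact hhatpc
    have hrb : revBar T p v = p e := hsup
    rw [hrb, hrev]
    calc p e ≤ p c := hpec
      _ = 2 * (p c / 2) := by
          rw [ENNReal.mul_div_cancel' (by norm_num) (by norm_num)]


/-- posting a single price on a single item extracts that price times the tail probability,
against every compatible joint distribution. -/
lemma single_price_le_robustRev (j₀ : Fin n) (x : ℝ≥0) :
    (x : ℝ≥0∞) * marg j₀ {y : ℝ | (x : ℝ) ≤ y} ≤
      robustRev B marg (fun j => if j = j₀ then (x : ℝ≥0∞) else ⊤) := by
  set q : Fin n → ℝ≥0∞ := fun j => if j = j₀ then (x : ℝ≥0∞) else ⊤ with hq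
  refine le_iInf₂ fun F hF => ?_
  have hqj₀ : q j₀ = (x : ℝ≥0∞) := by simp [hq]
  have hmeas : MeasurableSet {v : Fin n → ℝ | (x : ℝ) ≤ v j₀} :=
    (measurable_pi_apply j₀) measurableSet_Ici
  have hpt : ∀ v : Fin n → ℝ,
      ({v : Fin n → ℝ | (x : ℝ) ≤ v j₀}).indicator (fun _ => (x : ℝ≥0∞)) v ≤
        B.revenue q v := by
    intro v
    by_cases hv : (x : ℝ) ≤ v j₀
    · have hact : ∃ k, q k ≠ ⊤ ∧ (q k).toReal ≤ v k := by
        refine ⟨j₀, by simp [hqj₀], ?_⟩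
        rw [hqj₀]; simpa using hv
      have hsome := B.active v q hact
      rw [Option.isSome_iff_exists] at hsome
      obtain ⟨c, hc⟩ := hsome
      have hfc := B.feasible v q c hc
      have hcj : c = j₀ := by
        by_contra hcc
        exact hfc.1 (by simp [hq, hcc])
      have : B.revenue q v = (x : ℝ≥0∞) := by
        unfold BuyerRule.revenue; rw [hc, hcj]; exact hqj₀
      rw [this, Set.indicator_apply]
      split <;> simp
    · rw [Set.indicator_apply]
      have : v ∉ {v : Fin n → ℝ | (x : ℝ) ≤ v j₀} := hv
      rw [if_neg this]
      exact zero_le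
  calc (x : ℝ≥0∞) * marg j₀ {y : ℝ | (x : ℝ) ≤ y}
      = (x : ℝ≥0∞) * F {v : Fin n → ℝ | (x : ℝ) ≤ v j₀} := by
        have hs : MeasurableSet {y : ℝ | (x : ℝ) ≤ y} := measurableSet_Ici
        rw [← hF.2 j₀, Measure.map_apply (measurable_pi_apply j₀) hs]
        rfl
    _ = ∫⁻ v, ({v : Fin n → ℝ | (x : ℝ) ≤ v j₀}).indicator (fun _ => (x : ℝ≥0∞)) v ∂F :=
        (lintegral_indicator_const hmeas _).symm
    _ ≤ ∫⁻ v, B.revenue q v ∂F := lintegral_mono hpt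
    _ = expRev B q F := rfl

lemma exists_compatible_expRev_lt (p : Fin n → ℝ≥0∞) (hne : robustRev B marg p ≠ ⊤)
    {ε : ℝ≥0∞} (hε : ε ≠ 0) :
    ∃ F, Compatible marg F ∧ expRev B p F < robustRev B marg p + ε := by
  have h : robustRev B marg p < robustRev B marg p + ε := ENNReal.lt_add_right hne hε
  conv_lhs at h => rw [robustRev]
  rw [iInf_lt_iff] at h
  obtain ⟨F, hF⟩ := h
  rw [iInf_lt_iff] at hF
  obtain ⟨hFc, hlt⟩ := hF
  exact ⟨F, hFc, hlt⟩


/-- dyadic bucket index of a Myerson value `m` relative to the maximum `M`: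
the least `k` with `M < 2^(k+1) * m`, or `K+1` ("junk") if there is no such `k ≤ K`. -/
def bIdx (M : ℝ≥0∞) (K : ℕ) (m : ℝ≥0∞) : ℕ :=
  if h : M < 2 ^ (K + 1) * m then Nat.find (⟨K, h⟩ : ∃ k, M < 2 ^ (k + 1) * m) else K + 1

lemma bIdx_le (M : ℝ≥0∞) (K : ℕ) (m : ℝ≥0∞) : bIdx M K m ≤ K + 1 := by
  unfold bIdx
  split
  · exact le_trans (Nat.find_le (by assumption)) (Nat.le_succ K)
  · exact le_refl _

lemma bIdx_spec (M : ℝ≥0∞) (K : ℕ) (m : ℝ≥0∞) (hm : m ≤ M) (h : bIdx M K m ≤ K) :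
    2 ^ (bIdx M K m) * m ≤ M ∧ M < 2 ^ (bIdx M K m + 1) * m := by
  unfold bIdx at h ⊢
  split at h
  · next hK =>
    simp only [dif_pos hK]
    constructor
    · rcases Nat.eq_zero_or_pos (Nat.find (⟨K, hK⟩ : ∃ k, M < 2 ^ (k + 1) * m)) with h0 | hpos
      · rw [h0]; simpa using hm
      · have hmin := Nat.find_min (⟨K, hK⟩ : ∃ k, M < 2 ^ (k + 1) * m)
          (Nat.sub_lt hpos one_pos)
        rw [not_lt] at hmin
        have : Nat.find (⟨K, hK⟩ : ∃ k, M < 2 ^ (k + 1) * m) - 1 + 1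
            = Nat.find (⟨K, hK⟩ : ∃ k, M < 2 ^ (k + 1) * m) := Nat.succ_pred_eq_of_pos hpos
        rwa [this] at hmin
    · exact Nat.find_spec (⟨K, hK⟩ : ∃ k, M < 2 ^ (k + 1) * m)
  · omega

lemma bIdx_junk (M : ℝ≥0∞) (K : ℕ) (m : ℝ≥0∞) (h : bIdx M K m = K + 1) :
    2 ^ (K + 1) * m ≤ M := by
  unfold bIdx at h
  split at h
  · next hK =>
    exfalso
    have := Nat.find_le (h := (⟨K, hK⟩ : ∃ k, M < 2 ^ (k + 1) * m)) hK
    omega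
  · next hK => exact not_lt.mp hK

lemma bIdx_eq_zero (M : ℝ≥0∞) (K : ℕ) (m : ℝ≥0∞) (h : M < 2 * m) : bIdx M K m = 0 := by
  have h0 : M < 2 ^ (0 + 1) * m := by simpa using h
  have hK : M < 2 ^ (K + 1) * m := by
    refine lt_of_lt_of_le h ?_
    have h1 : (2 : ℝ≥0∞) = 2 ^ 1 := (pow_one 2).symm
    calc 2 * m = 2 ^ 1 * m := by rw [← h1]
      _ ≤ 2 ^ (K + 1) * m := by
          exact mul_le_mul_left (pow_le_pow_right' (by norm_num : (1:ℝ≥0∞) ≤ 2) (by omega)) m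
  unfold bIdx
  rw [dif_pos hK]
  exact Nat.find_eq_zero _ |>.mpr h0


lemma lintegral_revBar_le (T : Finset (Fin n)) (p : Fin n → ℝ≥0∞) (F : Measure (Fin n → ℝ)) :
    ∫⁻ v, revBar T p v ∂F ≤ 2 * expRev B (hatp T p) F := by
  have h2 : ∀ v, 2⁻¹ * revBar T p v ≤ B.revenue (hatp T p) v := by
    intro v
    calc 2⁻¹ * revBar T p v ≤ 2⁻¹ * (2 * B.revenue (hatp T p) v) :=
          mul_le_mul_right (revBar_le_revenue_hatp B v p T) _
      _ = B.revenue (hatp T p) v := by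
          rw [← mul_assoc, ENNReal.inv_mul_cancel (by norm_num) (by norm_num), one_mul]
  have hkey : 2⁻¹ * ∫⁻ v, revBar T p v ∂F ≤ expRev B (hatp T p) F := by
    rw [← lintegral_const_mul 2⁻¹ (measurable_revBar T p)]
    exact lintegral_mono h2
  calc ∫⁻ v, revBar T p v ∂F = 2 * (2⁻¹ * ∫⁻ v, revBar T p v ∂F) := by
        rw [← mul_assoc, ENNReal.mul_inv_cancel (by norm_num) (by norm_num), one_mul]
    _ ≤ 2 * expRev B (hatp T p) F := mul_le_mul_right hkey 2

lemma revenue_le_decomp (p : Fin n → ℝ≥0∞) (v : Fin n → ℝ) (b' : Fin n → ℕ) (K : ℕ)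
    (hb : ∀ j, b' j ≤ K + 1) :
    B.revenue p v ≤
      (∑ k ∈ Finset.range (K + 1), revBar (Finset.univ.filter (fun j => b' j = k)) p v)
        + ∑ j ∈ Finset.univ.filter (fun j => b' j = K + 1), qualTerm p j v := by
  unfold BuyerRule.revenue
  rcases hc : B.choose v p with _ | j₀
  · simp
  · have hf := B.feasible v p j₀ hc
    show p j₀ ≤ _
    by_cases hk : b' j₀ ≤ K
    · have h1 : p j₀ ≤ revBar (Finset.univ.filter (fun j => b' j = b' j₀)) p v :=
        price_le_revBar B v p hc (by simp)
      have h2 : revBar (Finset.univ.filter (fun j => b' j = b' j₀)) p v ≤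
          ∑ k ∈ Finset.range (K + 1), revBar (Finset.univ.filter (fun j => b' j = k)) p v :=
        Finset.single_le_sum
          (f := fun k => revBar (Finset.univ.filter (fun j => b' j = k)) p v)
          (fun _ _ => zero_le) (Finset.mem_range.2 (by omega))
      exact le_trans (le_trans h1 h2) le_self_add
    · have hkj : b' j₀ = K + 1 := by have := hb j₀; omega
      have h1 : p j₀ = qualTerm p j₀ v := by simp [qualTerm, hf.1, hf.2]
      have h2 : qualTerm p j₀ v ≤
          ∑ j ∈ Finset.univ.filter (fun j => b' j = K + 1), qualTerm p j v :=
        Finset.single_le_sum (f := fun j => qualTerm p j v) (fun _ _ => zero_le)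
          (by simp [hkj])
      rw [h1]
      exact le_trans h2 le_add_self


lemma robustRev_le_glue [∀ j, IsProbabilityMeasure (marg j)]
    (hfin : ∀ j, Mye (marg j) ≠ ⊤)
    (K : ℕ) (b' : Fin n → ℕ) (hb : ∀ j, b' j ≤ K + 1) (p : Fin n → ℝ≥0∞)
    (A J : ℝ≥0∞) (hAne : A ≠ ⊤) (hJne : J ≠ ⊤)
    (hA : ∀ k, k ≤ K →
      robustRev B marg (hatp (Finset.univ.filter (fun j => b' j = k)) p) ≤ A)
    (hJ : ∑ j ∈ Finset.univ.filter (fun j => b' j = K + 1), Mye (marg j) ≤ J) :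
    robustRev B marg p ≤ ((K + 1 : ℕ) : ℝ≥0∞) * (2 * A) + J := by
  have hMtot : (∑ j, Mye (marg j)) ≠ ⊤ := by
    rw [← lt_top_iff_ne_top, ENNReal.sum_lt_top]
    exact fun j _ => lt_top_iff_ne_top.2 (hfin j)
  have hrne : ∀ q : Fin n → ℝ≥0∞, robustRev B marg q ≠ ⊤ := fun q =>
    (lt_of_le_of_lt (robustRev_le_sum_Mye B marg q) (lt_top_iff_ne_top.2 hMtot)).ne
  refine ENNReal.le_of_forall_pos_le_add fun ε hε hlt => ?_
  set Tk : ℕ → Finset (Fin n) := fun k => Finset.univ.filter (fun j => b' j = k) with hTk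
  set ε' : ℝ≥0∞ := (ε : ℝ≥0∞) / ((K + 1 : ℕ) : ℝ≥0∞) with hε'
  have hε'ne : ε' / 2 ≠ 0 := by
    apply ENNReal.div_ne_zero.mpr
    refine ⟨?_, by norm_num⟩
    apply ENNReal.div_ne_zero.mpr
    refine ⟨by exact_mod_cast hε.ne', ?_⟩
    simp
  have hex : ∀ k : Fin (K + 2), ∃ F, Compatible marg F ∧
      ∫⁻ v, revBar (Tk (k : ℕ)) p v ∂F ≤
        2 * robustRev B marg (hatp (Tk (k : ℕ)) p) + ε' := by
    intro k
    obtain ⟨F, hFc, hFlt⟩ :=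
      exists_compatible_expRev_lt B marg (hatp (Tk (k : ℕ)) p) (hrne _) hε'ne
    refine ⟨F, hFc, ?_⟩
    calc ∫⁻ v, revBar (Tk (k : ℕ)) p v ∂F ≤ 2 * expRev B (hatp (Tk (k : ℕ)) p) F :=
          lintegral_revBar_le B (Tk (k : ℕ)) p F
      _ ≤ 2 * (robustRev B marg (hatp (Tk (k : ℕ)) p) + ε' / 2) :=
          mul_le_mul_right hFlt.le 2
      _ = 2 * robustRev B marg (hatp (Tk (k : ℕ)) p) + 2 * (ε' / 2) := mul_add _ _ _
      _ ≤ 2 * robustRev B marg (hatp (Tk (k : ℕ)) p) + ε' :=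
          add_le_add_right ENNReal.mul_div_le _
  choose FF hFFc hFFb using hex
  haveI : ∀ k, IsProbabilityMeasure (FF k) := fun k => (hFFc k).1
  set b2 : Fin n → Fin (K + 2) := fun j => ⟨b' j, by have := hb j; omega⟩ with hb2
  set Φ : (Fin (K + 2) → (Fin n → ℝ)) → (Fin n → ℝ) := fun ω j => ω (b2 j) j with hΦ
  have hΦmeas : Measurable Φ :=
    measurable_pi_lambda _ (fun j => (measurable_pi_apply j).comp (measurable_pi_apply (b2 j)))
  set G : Measure (Fin n → ℝ) := (Measure.pi FF).map Φ with hG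
  haveI : IsProbabilityMeasure G := Measure.isProbabilityMeasure_map hΦmeas.aemeasurable
  have hGcomp : Compatible marg G := by
    refine ⟨inferInstance, fun j => ?_⟩
    rw [hG, Measure.map_map (measurable_pi_apply j) hΦmeas]
    have hcomp : ((fun v : Fin n → ℝ => v j) ∘ Φ)
        = (fun w : Fin n → ℝ => w j) ∘ (Function.eval (b2 j)) := rfl
    rw [hcomp, ← Measure.map_map (measurable_pi_apply j) (measurable_pi_apply (b2 j)),
      map_eval_pi]
    exact (hFFc (b2 j)).2 j
  -- the per-bucket integral identity
  have hint : ∀ (k : ℕ) (hk : k < K + 1),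
      ∫⁻ v, revBar (Tk k) p v ∂G =
        ∫⁻ v, revBar (Tk k) p v ∂(FF ⟨k, by omega⟩) := by
    intro k hk
    set k2 : Fin (K + 2) := ⟨k, by omega⟩ with hk2
    rw [hG, lintegral_map (measurable_revBar _ _) hΦmeas]
    have hdep : ∀ ω : Fin (K + 2) → (Fin n → ℝ),
        revBar (Tk k) p (Φ ω) = revBar (Tk k) p (ω k2) := by
      intro ω
      refine revBar_congr _ _ fun j hj => ?_
      have hbj : b' j = k := by
        rw [hTk] at hj; simpa using hj
      have : b2 j = k2 := by
        rw [hb2, hk2]; exact Fin.ext (by simpa using hbj)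
      show ω (b2 j) j = ω k2 j
      rw [this]
    calc ∫⁻ ω, revBar (Tk k) p (Φ ω) ∂(Measure.pi FF)
        = ∫⁻ ω, revBar (Tk k) p (ω k2) ∂(Measure.pi FF) := by
          congr 1; funext ω; exact hdep ω
      _ = ∫⁻ v, revBar (Tk k) p v ∂((Measure.pi FF).map (Function.eval k2)) :=
          (lintegral_map (measurable_revBar _ _) (measurable_pi_apply k2)).symm
      _ = ∫⁻ v, revBar (Tk k) p v ∂(FF k2) := by rw [map_eval_pi]
  -- main chain
  have hchain : robustRev B marg p ≤
      (∑ k ∈ Finset.range (K + 1), (2 * A + ε')) + J := by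
    calc robustRev B marg p ≤ expRev B p G := robustRev_le_expRev B marg hGcomp p
      _ ≤ ∫⁻ v, (∑ k ∈ Finset.range (K + 1), revBar (Tk k) p v)
            + ∑ j ∈ Tk (K + 1), qualTerm p j v ∂G :=
          lintegral_mono fun v => revenue_le_decomp B p v b' K hb
      _ = (∑ k ∈ Finset.range (K + 1), ∫⁻ v, revBar (Tk k) p v ∂G)
            + ∑ j ∈ Tk (K + 1), ∫⁻ v, qualTerm p j v ∂G := by
          rw [lintegral_add_left (Finset.measurable_sum _
            (fun k _ => measurable_revBar (Tk k) p))]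
          rw [lintegral_finset_sum _ (fun k _ => measurable_revBar (Tk k) p),
            lintegral_finset_sum _ (fun j _ => measurable_qualTerm p j)]
      _ ≤ (∑ k ∈ Finset.range (K + 1), (2 * A + ε')) + J := by
          refine add_le_add ?_ ?_
          · refine Finset.sum_le_sum fun k hk => ?_
            rw [Finset.mem_range] at hk
            rw [hint k hk]
            refine le_trans (hFFb ⟨k, by omega⟩) ?_
            exact add_le_add_left (mul_le_mul_right (hA k (by omega)) 2) ε'
          · refine le_trans (Finset.sum_le_sum fun j hj => ?_) hJ
            exact lintegral_qualTerm_le marg hGcomp p j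
  refine le_trans hchain ?_
  rw [Finset.sum_const, Finset.card_range, nsmul_eq_mul, mul_add]
  have h1 : ((K + 1 : ℕ) : ℝ≥0∞) * ε' ≤ (ε : ℝ≥0∞) := by
    rw [hε']
    exact ENNReal.mul_div_le
  calc ((K + 1 : ℕ) : ℝ≥0∞) * (2 * A) + ((K + 1 : ℕ) : ℝ≥0∞) * ε' + J
      ≤ ((K + 1 : ℕ) : ℝ≥0∞) * (2 * A) + (ε : ℝ≥0∞) + J :=
        add_le_add_left (add_le_add_right h1 _) J
    _ = ((K + 1 : ℕ) : ℝ≥0∞) * (2 * A) + J + (ε : ℝ≥0∞) := by ring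

end RobustAux

/-- There is a universal constant `C > 0` such that for every `n ≥ 2` and
every instance with marginals on the nonnegative reals having finite Myerson revenues, there
exist a subset `S` of the items whose Myerson revenues are at most a factor `2` apart, and a
pricing `p` with `p j = ∞` for every `j ∉ S`, such that `p` is `(C·log n)`-max-min optimal:
`R* ≤ C·(log n)·R(p)`. -/
theorem near_equal_myerson_bucket_pricing_is_log_max_min_optimal :
    ∃ C : ℝ, 0 < C ∧
      ∀ (n : ℕ), 2 ≤ n →
        ∀ (B : BuyerRule n) (marg : Fin n → Measure ℝ),
          (∀ j, IsProbabilityMeasure (marg j)) →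
          (∀ j, marg j (Set.Iio 0) = 0) →
          (∀ j, Mye (marg j) ≠ ⊤) →
          ∃ (S : Finset (Fin n)) (p : Fin n → ℝ≥0∞),
            (∀ j : Fin n, j ∉ S → p j = ⊤) ∧
            (∀ i ∈ S, ∀ j ∈ S, Mye (marg i) ≤ 2 * Mye (marg j)) ∧
            optRobust B marg ≤ ENNReal.ofReal (C * Real.log n) * robustRev B marg p := by
  refine ⟨100, by norm_num, ?_⟩
  intro n hn B marg hprob hpos hfin
  haveI := hprob
  haveI : Nonempty (Fin n) := ⟨⟨0, by omega⟩⟩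
  have hMtot_ne : (∑ j, Mye (marg j)) ≠ ⊤ := by
    rw [← lt_top_iff_ne_top, ENNReal.sum_lt_top]
    exact fun j _ => lt_top_iff_ne_top.2 (hfin j)
  set M : ℝ≥0∞ := ⨆ j, Mye (marg j) with hM
  have hMye_le : ∀ j, Mye (marg j) ≤ M := fun j => by
    rw [hM]; exact le_iSup (fun j => Mye (marg j)) j
  have hM_le : M ≤ ∑ j, Mye (marg j) := by
    rw [hM]
    exact iSup_le fun j => Finset.single_le_sum (f := fun j => Mye (marg j))
      (fun _ _ => zero_le) (Finset.mem_univ j)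
  have hM_ne : M ≠ ⊤ := (lt_of_le_of_lt hM_le (lt_top_iff_ne_top.2 hMtot_ne)).ne
  rcases eq_or_ne M 0 with hM0 | hMpos
  · -- degenerate case: all Myerson revenues vanish and `R* = 0`
    have hall : ∀ j, Mye (marg j) = 0 := fun j => le_antisymm (hM0 ▸ hMye_le j) (zero_le)
    have hopt : optRobust B marg = 0 := by
      refine le_antisymm (iSup_le fun p => ?_) (zero_le)
      refine le_trans (RobustAux.robustRev_le_sum_Mye B marg p) ?_
      simp [hall]
    refine ⟨∅, fun _ => ⊤, fun j _ => rfl, by simp, ?_⟩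
    rw [hopt]; exact zero_le
  · set L := Nat.log2 n with hL
    set K := 2 * L + 2 with hK
    set b' : Fin n → ℕ := fun j => RobustAux.bIdx M K (Mye (marg j)) with hb'
    have hb : ∀ j, b' j ≤ K + 1 := fun j => RobustAux.bIdx_le M K _
    set A : ℝ≥0∞ := ⨆ (q : Fin n → ℝ≥0∞)
      (_ : ∃ k, k ≤ K ∧ ∀ j, b' j ≠ k → q j = ⊤), robustRev B marg q with hA
    have hA_le : A ≤ ∑ j, Mye (marg j) := by
      rw [hA]
      exact iSup₂_le fun q _ => RobustAux.robustRev_le_sum_Mye B marg q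
    have hA_ne : A ≠ ⊤ := (lt_of_le_of_lt hA_le (lt_top_iff_ne_top.2 hMtot_ne)).ne
    -- a single-item pricing witnessing `M/2 ≤ A`
    have hhalf : M / 2 < M := ENNReal.half_lt_self hMpos hM_ne
    have hhalf' : M / 2 < ⨆ j, Mye (marg j) := by rw [← hM]; exact hhalf
    obtain ⟨j₀, hj₀⟩ := lt_iSup_iff.mp hhalf'
    have hj₀' : M / 2 < ⨆ x : ℝ≥0, (x : ℝ≥0∞) * marg j₀ {y : ℝ | (x : ℝ) ≤ y} := by
      rw [← Mye]; exact hj₀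
    obtain ⟨x, hx⟩ := lt_iSup_iff.mp hj₀'
    set q₀ : Fin n → ℝ≥0∞ := fun j => if j = j₀ then (x : ℝ≥0∞) else ⊤ with hq₀
    have hq₀r : M / 2 < robustRev B marg q₀ :=
      lt_of_lt_of_le hx (RobustAux.single_price_le_robustRev B marg j₀ x)
    have hMj₀ : M < 2 * Mye (marg j₀) := by
      have := (ENNReal.div_lt_iff (Or.inl (by norm_num)) (Or.inl (by norm_num))).mp hj₀
      rwa [mul_comm] at this
    have hb'j₀ : b' j₀ = 0 := RobustAux.bIdx_eq_zero M K _ hMj₀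
    have hq₀A : robustRev B marg q₀ ≤ A := by
      rw [hA]
      refine le_iSup₂ (f := fun (q : Fin n → ℝ≥0∞) _ => robustRev B marg q) q₀ ?_
      refine ⟨0, by omega, fun j hj => ?_⟩
      have : j ≠ j₀ := fun h => hj (h ▸ hb'j₀)
      simp [hq₀, this]
    have hMA : M / 2 ≤ A := le_trans hq₀r.le hq₀A
    have hA0 : A ≠ 0 := by
      intro h
      rw [h, le_zero_iff, ENNReal.div_eq_zero_iff] at hMA
      rcases hMA with h' | h'
      · exact hMpos h'
      · norm_num at h'
    -- junk bucket contributes at most M/2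
    have hnK : ((n : ℕ) : ℝ≥0∞) ≤ 2 ^ K := by
      have h1 : n < 2 ^ (L + 1) := by rw [hL]; exact Nat.lt_log2_self
      have h2 : 2 ^ (L + 1) ≤ 2 ^ K := Nat.pow_le_pow_right (by norm_num) (by omega)
      have h3 : (n : ℕ) ≤ 2 ^ K := by omega
      calc ((n : ℕ) : ℝ≥0∞) ≤ ((2 ^ K : ℕ) : ℝ≥0∞) := by exact_mod_cast h3
        _ = 2 ^ K := by push_cast; ring
    have hJ : ∑ j ∈ Finset.univ.filter (fun j => b' j = K + 1), Mye (marg j) ≤ M / 2 := by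
      set Jv := ∑ j ∈ Finset.univ.filter (fun j => b' j = K + 1), Mye (marg j) with hJv
      have hstep : Jv * 2 * 2 ^ K ≤ M * 2 ^ K := by
        have h1 : Jv * 2 * 2 ^ K = ∑ j ∈ Finset.univ.filter (fun j => b' j = K + 1),
            2 ^ (K + 1) * Mye (marg j) := by
          rw [hJv, Finset.sum_mul, Finset.sum_mul]
          refine Finset.sum_congr rfl fun j _ => ?_
          rw [pow_succ]; ring
        have h2 : ∑ j ∈ Finset.univ.filter (fun j => b' j = K + 1),
            2 ^ (K + 1) * Mye (marg j) ≤
              ∑ _j ∈ Finset.univ.filter (fun j => b' j = K + 1), M := by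
          refine Finset.sum_le_sum fun j hj => ?_
          refine RobustAux.bIdx_junk M K _ ?_
          rw [Finset.mem_filter] at hj
          exact hj.2
        have h3 : ∑ _j ∈ Finset.univ.filter (fun j => b' j = K + 1), M ≤ M * 2 ^ K := by
          rw [Finset.sum_const, nsmul_eq_mul]
          calc ((Finset.univ.filter (fun j => b' j = K + 1)).card : ℝ≥0∞) * M
              ≤ ((n : ℕ) : ℝ≥0∞) * M := by
                refine mul_le_mul_left ?_ M
                have := Finset.card_filter_le Finset.univ (fun j => b' j = K + 1)
                rw [Finset.card_univ, Fintype.card_fin] at this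
                exact_mod_cast this
            _ ≤ 2 ^ K * M := mul_le_mul_left hnK M
            _ = M * 2 ^ K := mul_comm _ _
        rw [h1]
        exact le_trans h2 h3
      have hcancel : Jv * 2 ≤ M := by
        have hpow0 : (2 : ℝ≥0∞) ^ K ≠ 0 := by positivity
        have hpowt : (2 : ℝ≥0∞) ^ K ≠ ⊤ := by
          exact ENNReal.pow_ne_top (by norm_num)
        exact (ENNReal.mul_le_mul_iff_left hpow0 hpowt).mp hstep
      exact (ENNReal.le_div_iff_mul_le (Or.inl (by norm_num)) (Or.inl (by norm_num))).mpr hcancel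
    -- the per-pricing bound
    have hbound : ∀ p : Fin n → ℝ≥0∞,
        robustRev B marg p ≤ ((K + 1 : ℕ) : ℝ≥0∞) * (2 * A) + M / 2 := by
      intro p
      refine RobustAux.robustRev_le_glue B marg hfin K b' hb p A (M / 2) hA_ne
        ((ENNReal.div_lt_top hM_ne (by norm_num)).ne) (fun k hk => ?_) hJ
      rw [hA]
      refine le_iSup₂ (f := fun (q : Fin n → ℝ≥0∞) _ => robustRev B marg q) _ ?_
      refine ⟨k, hk, fun j hj => ?_⟩
      have : j ∉ Finset.univ.filter (fun j => b' j = k) := by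
        simp only [Finset.mem_filter, Finset.mem_univ, true_and]
        exact hj
      unfold RobustAux.hatp
      rw [if_neg]
      intro hcon
      exact this hcon.1
    have hopt : optRobust B marg ≤ ((K + 1 : ℕ) : ℝ≥0∞) * (2 * A) + A := by
      rw [optRobust]
      exact iSup_le fun p => le_trans (hbound p) (add_le_add_right hMA _)
    -- extract a near-optimal bucket pricing from A
    have hAA : A / 2 < A := ENNReal.half_lt_self hA0 hA_ne
    have hAA' : A / 2 < ⨆ (q : Fin n → ℝ≥0∞)
        (_ : ∃ k, k ≤ K ∧ ∀ j, b' j ≠ k → q j = ⊤), robustRev B marg q := by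
      rw [← hA]; exact hAA
    obtain ⟨q, hq'⟩ := lt_iSup_iff.mp hAA'
    obtain ⟨hqprop, hqlt⟩ := lt_iSup_iff.mp hq'
    obtain ⟨k₀, hk₀K, hsupp⟩ := hqprop
    refine ⟨Finset.univ.filter (fun j => b' j = k₀), q, ?_, ?_, ?_⟩
    · intro j hj
      refine hsupp j ?_
      simp only [Finset.mem_filter, Finset.mem_univ, true_and] at hj
      exact hj
    · -- Myerson revenues within the bucket are within a factor 2
      intro i hi j hj
      simp only [Finset.mem_filter, Finset.mem_univ, true_and] at hi hj
      have hIdxi : RobustAux.bIdx M K (Mye (marg i)) = k₀ := hi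
      have hIdxj : RobustAux.bIdx M K (Mye (marg j)) = k₀ := hj
      have hi' := (RobustAux.bIdx_spec M K (Mye (marg i)) (hMye_le i)
        (by rw [hIdxi]; exact hk₀K)).1
      have hj' := (RobustAux.bIdx_spec M K (Mye (marg j)) (hMye_le j)
        (by rw [hIdxj]; exact hk₀K)).2
      rw [hIdxi] at hi'
      rw [hIdxj] at hj'
      have hchain : 2 ^ k₀ * Mye (marg i) < 2 ^ k₀ * (2 * Mye (marg j)) := by
        refine lt_of_le_of_lt hi' (lt_of_lt_of_le hj' ?_)
        rw [pow_succ]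
        ring_nf
        exact le_refl _
      exact (lt_of_mul_lt_mul_left' hchain).le
    · -- the numeric bound
      have hAq : A ≤ robustRev B marg q * 2 := by
        refine (ENNReal.div_le_iff_le_mul (Or.inl (by norm_num)) (Or.inl (by norm_num))).mp ?_
        exact hqlt.le
      have hnum : ((4 * K + 6 : ℕ) : ℝ≥0∞) ≤ ENNReal.ofReal (100 * Real.log n) := by
        rw [← ENNReal.ofReal_natCast (4 * K + 6)]
        refine ENNReal.ofReal_le_ofReal ?_
        have hL2 : ((2 : ℝ)) ^ L ≤ (n : ℝ) := by
          have := Nat.log2_self_le (show n ≠ 0 by omega)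
          rw [hL]
          exact_mod_cast this
        have hlogL : (L : ℝ) * Real.log 2 ≤ Real.log n := by
          have h1 : Real.log ((2 : ℝ) ^ L) = (L : ℝ) * Real.log 2 := by
            rw [Real.log_pow]
          rw [← h1]
          exact Real.log_le_log (by positivity) hL2
        have hlog2 : (0.6931471803 : ℝ) < Real.log 2 := Real.log_two_gt_d9
        have hlogn : Real.log 2 ≤ Real.log n :=
          Real.log_le_log (by norm_num) (by exact_mod_cast hn)
        have hlognpos : (0 : ℝ) < Real.log n := by linarith
        have hLpos : (0 : ℝ) ≤ (L : ℝ) := Nat.cast_nonneg L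
        have hgoal : ((4 * K + 6 : ℕ) : ℝ) = 8 * (L : ℝ) + 14 := by
          rw [hK]; push_cast; ring
        rw [hgoal]
        have hlog2pos : (0 : ℝ) < Real.log 2 := by linarith
        have hmul : (8 * (L : ℝ) + 14) * Real.log 2 ≤ 100 * Real.log n * Real.log 2 := by
          have e1 : (8 * (L : ℝ)) * Real.log 2 ≤ 8 * Real.log n := by nlinarith
          have e2 : (14 : ℝ) * Real.log 2 ≤ 14 * Real.log n := by nlinarith
          nlinarith
        exact le_of_mul_le_mul_right hmul hlog2pos
      calc optRobust B marg ≤ ((K + 1 : ℕ) : ℝ≥0∞) * (2 * A) + A := hopt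
        _ = ((2 * K + 3 : ℕ) : ℝ≥0∞) * A := by push_cast; ring
        _ ≤ ((2 * K + 3 : ℕ) : ℝ≥0∞) * (robustRev B marg q * 2) := mul_le_mul_right hAq _
        _ = ((4 * K + 6 : ℕ) : ℝ≥0∞) * robustRev B marg q := by push_cast; ring
        _ ≤ ENNReal.ofReal (100 * Real.log n) * robustRev B marg q :=
            mul_le_mul_left hnum _
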